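/- As the sample size M increases (with nested samples), the SAA optimal value is monotonically nondecreasing in expectation: E[c_M] ≤ E[c_{M+1}], where c_M = min_{x∈X} (1/M)∑_{m=1}^M F(x,ω_m). -/

import Mathlib

open MeasureTheory Finset

private lemma meas_inf' {α δ : Type*} [MeasurableSpace δ] (s : Finset α) (hs : s.Nonempty)
    (f : α → δ → ℝ) (hf : ∀ a, Measurable (f a)) :
    Measurable (fun ω => s.inf' hs fun a => f a ω) := by
  induction hs using Finset.Nonempty.cons_induction with
  | singleton a => exact hf a
  | cons a s ha hs ih =>
      simp only [Finset.inf'_cons hs]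
      exact (hf a).min ih

/-- SAA monotonicity (Mak–Morton–Wood): with nested i.i.d. samples, the expected SAA
optimal value is nondecreasing in the sample size: `E[c_M] ≤ E[c_{M+1}]`, where
`c_M = min_{x∈X} (1/M) ∑_{m<M} F(x, ω_m)`. Both expectations are taken over the product
measure on `M+1` samples, with `c_M` using only the first `M` of them. -/
theorem stmt_3 {X Ω : Type*} [Fintype X] [Nonempty X] [MeasurableSpace Ω]
    (P : Measure Ω) [IsProbabilityMeasure P] (M : ℕ) (hM : 0 < M)
    (F : X → Ω → ℝ) (C : ℝ)
    (hmeas : ∀ x, Measurable (F x)) (hbd : ∀ x ω, |F x ω| ≤ C) :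
    ∫ ωs, (Finset.univ.inf' Finset.univ_nonempty fun x : X =>
          (1 / (M : ℝ)) * ∑ m : Fin M, F x (ωs m.castSucc))
        ∂(Measure.pi fun _ : Fin (M + 1) => P)
      ≤ ∫ ωs, (Finset.univ.inf' Finset.univ_nonempty fun x : X =>
          (1 / ((M : ℝ) + 1)) * ∑ m : Fin (M + 1), F x (ωs m))
        ∂(Measure.pi fun _ : Fin (M + 1) => P) := by
  set π : Measure (Fin (M + 1) → Ω) := Measure.pi fun _ : Fin (M + 1) => P with hπ
  have hMpos : (0 : ℝ) < M := by exact_mod_cast hM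
  set g : (Fin (M + 1) → Ω) → ℝ := fun ωs =>
    Finset.univ.inf' Finset.univ_nonempty fun x : X =>
      (1 / (M : ℝ)) * ∑ m : Fin M, F x (ωs m.castSucc) with hg
  set h : Fin (M + 1) → (Fin (M + 1) → Ω) → ℝ := fun k ωs =>
    Finset.univ.inf' Finset.univ_nonempty fun x : X =>
      (1 / (M : ℝ)) * ∑ m ∈ Finset.univ.erase k, F x (ωs m) with hh
  set cf : (Fin (M + 1) → Ω) → ℝ := fun ωs =>
    Finset.univ.inf' Finset.univ_nonempty fun x : X =>
      (1 / ((M : ℝ) + 1)) * ∑ m : Fin (M + 1), F x (ωs m) with hcf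
  -- key pointwise identity: h k ωs = g (ωs ∘ swap k last)
  have hcomp : ∀ (k : Fin (M + 1)) (ωs : Fin (M + 1) → Ω),
      h k ωs = g (ωs ∘ Equiv.swap k (Fin.last M)) := by
    intro k ωs
    simp only [hh, hg]
    congr 1
    funext x
    congr 1
    set f : Fin (M + 1) → ℝ := fun j => F x (ωs j) with hf
    have h1 : ∑ j : Fin (M + 1), f (Equiv.swap k (Fin.last M) j)
        = (∑ m : Fin M, f (Equiv.swap k (Fin.last M) m.castSucc))
          + f (Equiv.swap k (Fin.last M) (Fin.last M)) := by
      rw [Fin.sum_univ_castSucc]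
    have h2 : ∑ j : Fin (M + 1), f (Equiv.swap k (Fin.last M) j) = ∑ j, f j :=
      Equiv.sum_comp _ f
    have h3 : ∑ j : Fin (M + 1), f j = f k + ∑ j ∈ Finset.univ.erase k, f j :=
      (Finset.add_sum_erase _ f (Finset.mem_univ k)).symm
    have h4 : Equiv.swap k (Fin.last M) (Fin.last M) = k := Equiv.swap_apply_right _ _
    rw [h4] at h1
    have h5 : (∑ m : Fin M, f (Equiv.swap k (Fin.last M) m.castSucc)) + f k
        = f k + ∑ j ∈ Finset.univ.erase k, f j := by linarith
    simp only [Function.comp]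
    linarith
  -- boundedness
  have hsumbd : ∀ (x : X) (k : Fin (M + 1)) (ωs : Fin (M + 1) → Ω),
      |(1 / (M : ℝ)) * ∑ m ∈ Finset.univ.erase k, F x (ωs m)| ≤ C := by
    intro x k ωs
    have hcard : ((Finset.univ.erase k).card : ℝ) = M := by
      rw [Finset.card_erase_of_mem (Finset.mem_univ k)]
      simp
    calc |(1 / (M : ℝ)) * ∑ m ∈ Finset.univ.erase k, F x (ωs m)|
        = (1 / (M : ℝ)) * |∑ m ∈ Finset.univ.erase k, F x (ωs m)| := by
          rw [abs_mul, abs_of_pos (by positivity)]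
      _ ≤ (1 / (M : ℝ)) * ∑ m ∈ Finset.univ.erase k, |F x (ωs m)| := by
          gcongr; exact Finset.abs_sum_le_sum_abs _ _
      _ ≤ (1 / (M : ℝ)) * ∑ _m ∈ Finset.univ.erase k, C := by
          gcongr with m; exact hbd x _
      _ = C := by
          rw [Finset.sum_const, nsmul_eq_mul, hcard]
          field_simp
  have hinfbd : ∀ (k : Fin (M + 1)) (ωs : Fin (M + 1) → Ω), |h k ωs| ≤ C := by
    intro k ωs
    rw [abs_le]
    obtain ⟨x₀⟩ := (inferInstance : Nonempty X)
    constructor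
    · apply Finset.le_inf'
      intro x _
      exact neg_le_of_abs_le (hsumbd x k ωs)
    · exact le_trans (Finset.inf'_le _ (Finset.mem_univ x₀)) (le_of_abs_le (hsumbd x₀ k ωs))
  -- measurability
  have hmeas_g : Measurable g :=
    meas_inf' Finset.univ Finset.univ_nonempty _ (fun x =>
      measurable_const.mul (Finset.measurable_sum _ fun m _ =>
        (hmeas x).comp (measurable_pi_apply m.castSucc)))
  have hmeas_h : ∀ k, Measurable (h k) := fun k =>
    meas_inf' Finset.univ Finset.univ_nonempty _ (fun x =>
      measurable_const.mul (Finset.measurable_sum _ fun m _ =>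
        (hmeas x).comp (measurable_pi_apply m)))
  have hmeas_cf : Measurable cf :=
    meas_inf' Finset.univ Finset.univ_nonempty _ (fun x =>
      measurable_const.mul (Finset.measurable_sum _ fun m _ =>
        (hmeas x).comp (measurable_pi_apply m)))
  -- integrability
  have hint : ∀ (f : (Fin (M + 1) → Ω) → ℝ), Measurable f → (∀ ωs, |f ωs| ≤ C) →
      Integrable f π := by
    intro f hf hfb
    refine (integrable_const C).mono' hf.aestronglyMeasurable ?_
    filter_upwards with ωs using by simpa using hfb ωs
  have hint_g : Integrable g π := by
    refine hint g hmeas_g fun ωs => ?_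
    have := hinfbd (Fin.last M) ωs
    rw [hcomp (Fin.last M) ωs] at this
    simpa using this
  have hint_h : ∀ k, Integrable (h k) π := fun k => hint (h k) (hmeas_h k) (hinfbd k)
  have hint_cf : Integrable cf π := by
    refine hint cf hmeas_cf fun ωs => ?_
    rw [abs_le]
    obtain ⟨x₀⟩ := (inferInstance : Nonempty X)
    have hb : ∀ x, |(1 / ((M : ℝ) + 1)) * ∑ m : Fin (M + 1), F x (ωs m)| ≤ C := by
      intro x
      calc |(1 / ((M : ℝ) + 1)) * ∑ m : Fin (M + 1), F x (ωs m)|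
          = (1 / ((M : ℝ) + 1)) * |∑ m : Fin (M + 1), F x (ωs m)| := by
            rw [abs_mul, abs_of_pos (by positivity)]
        _ ≤ (1 / ((M : ℝ) + 1)) * ∑ m : Fin (M + 1), |F x (ωs m)| := by
            gcongr; exact Finset.abs_sum_le_sum_abs _ _
        _ ≤ (1 / ((M : ℝ) + 1)) * ∑ _m : Fin (M + 1), C := by
            gcongr with m; exact hbd x _
        _ = C := by
            rw [Finset.sum_const, nsmul_eq_mul]
            simp
            field_simp
    constructor
    · exact Finset.le_inf' _ _ fun x _ => neg_le_of_abs_le (hb x)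
    · exact le_trans (Finset.inf'_le _ (Finset.mem_univ x₀)) (le_of_abs_le (hb x₀))
  -- each E[h k] = E[g]
  have hEhk : ∀ k, ∫ ωs, h k ωs ∂π = ∫ ωs, g ωs ∂π := by
    intro k
    set e : (Fin (M + 1) → Ω) ≃ᵐ (Fin (M + 1) → Ω) :=
      MeasurableEquiv.piCongrLeft (fun _ : Fin (M + 1) => Ω)
        (Equiv.swap k (Fin.last M)).symm with he
    have heq : ∀ ωs : Fin (M + 1) → Ω, e ωs = ωs ∘ Equiv.swap k (Fin.last M) := by
      intro ωs
      funext j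
      rw [show j = (Equiv.swap k (Fin.last M)).symm ((Equiv.swap k (Fin.last M)) j) by simp]
      rw [he, MeasurableEquiv.piCongrLeft_apply_apply]
      simp
    have hmp : MeasurePreserving e π π :=
      measurePreserving_piCongrLeft (fun _ : Fin (M + 1) => P)
        (Equiv.swap k (Fin.last M)).symm
    calc ∫ ωs, h k ωs ∂π = ∫ ωs, g (e ωs) ∂π := by
          simp_rw [hcomp k, heq]
      _ = ∫ ωs, g ωs ∂π := hmp.integral_comp e.measurableEmbedding g
  -- pointwise domination
  have hpt : ∀ ωs, (1 / ((M : ℝ) + 1)) * ∑ k : Fin (M + 1), h k ωs ≤ cf ωs := by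
    intro ωs
    apply Finset.le_inf'
    intro x _
    have hkey : ∑ k : Fin (M + 1), (1 / (M : ℝ)) * ∑ m ∈ Finset.univ.erase k, F x (ωs m)
        = ∑ m : Fin (M + 1), F x (ωs m) := by
      have : ∀ k : Fin (M + 1), ∑ m ∈ Finset.univ.erase k, F x (ωs m)
          = (∑ m : Fin (M + 1), F x (ωs m)) - F x (ωs k) := by
        intro k
        rw [eq_sub_iff_add_eq, Finset.sum_erase_add _ _ (Finset.mem_univ k)]
      have hM0 : (M : ℝ) ≠ 0 := ne_of_gt hMpos
      simp_rw [this]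
      rw [← Finset.mul_sum, Finset.sum_sub_distrib, Finset.sum_const, nsmul_eq_mul]
      field_simp
      rw [Finset.card_univ, Fintype.card_fin]; push_cast
      ring
    have hterm : ∀ k : Fin (M + 1), h k ωs
        ≤ (1 / (M : ℝ)) * ∑ m ∈ Finset.univ.erase k, F x (ωs m) := fun k =>
      Finset.inf'_le _ (Finset.mem_univ x)
    calc (1 / ((M : ℝ) + 1)) * ∑ k : Fin (M + 1), h k ωs
        ≤ (1 / ((M : ℝ) + 1)) * ∑ k : Fin (M + 1),
            (1 / (M : ℝ)) * ∑ m ∈ Finset.univ.erase k, F x (ωs m) :=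
          mul_le_mul_of_nonneg_left (Finset.sum_le_sum fun k _ => hterm k) (by positivity)
      _ = (1 / ((M : ℝ) + 1)) * ∑ m : Fin (M + 1), F x (ωs m) := by rw [hkey]
  -- put it together
  calc ∫ ωs, g ωs ∂π
      = ∫ ωs, (1 / ((M : ℝ) + 1)) * ∑ k : Fin (M + 1), h k ωs ∂π := by
        rw [integral_const_mul, integral_finset_sum _ fun k _ => hint_h k]
        simp_rw [hEhk]
        rw [Finset.sum_const, nsmul_eq_mul]
        rw [Finset.card_univ, Fintype.card_fin]; push_cast
        field_simp
    _ ≤ ∫ ωs, cf ωs ∂π := by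
        refine integral_mono ?_ hint_cf hpt
        exact ((integrable_finset_sum _ fun k _ => hint_h k).const_mul _)
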